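/- Let (A,X,Y) be jointly distributed random variables with finite ranges. If H(A | X,Y) = 0 and condition (B) holds (for all a, x, y: p(a,x) > 0 and p(a,y) > 0 imply p(a,x,y) > 0), then condition (C) holds: for all a, a', x, y, if p(a,x), p(a,y), p(a',x), p(a',y) are all positive, then a = a'. -/
import Mathlib


open Finset

noncomputable section

/-- Probability of an event under a distribution on a finite sample space. -/
def pr {Ω : Type*} [Fintype Ω] (p : Ω → ℝ) (E : Set Ω) : ℝ :=
  ∑ ω, E.indicator p ω

/-- `p` is a probability mass function on the finite sample space `Ω`. -/
def IsPMF {Ω : Type*} [Fintype Ω] (p : Ω → ℝ) : Prop :=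
  (∀ ω, 0 ≤ p ω) ∧ ∑ ω, p ω = 1

/-- Shannon entropy (base 2) of a random variable `V` on a finite sample space. -/
def ent {Ω β : Type*} [Fintype Ω] [Fintype β] (p : Ω → ℝ) (V : Ω → β) : ℝ :=
  -∑ v, pr p {ω | V ω = v} * Real.logb 2 (pr p {ω | V ω = v})

/-- Conditional Shannon entropy (base 2): `H(V | W)`. -/
def condEnt {Ω β γ : Type*} [Fintype Ω] [Fintype β] [Fintype γ]
    (p : Ω → ℝ) (V : Ω → β) (W : Ω → γ) : ℝ :=
  ent p (fun ω => (V ω, W ω)) - ent p W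

/-- Mutual information (base 2): `I(V : W)`. -/
def mi {Ω β γ : Type*} [Fintype Ω] [Fintype β] [Fintype γ]
    (p : Ω → ℝ) (V : Ω → β) (W : Ω → γ) : ℝ :=
  ent p V + ent p W - ent p (fun ω => (V ω, W ω))

/-- Conditional mutual information (base 2): `I(V : W | U)`. -/
def cmi {Ω β γ δ : Type*} [Fintype Ω] [Fintype β] [Fintype γ] [Fintype δ]
    (p : Ω → ℝ) (V : Ω → β) (W : Ω → γ) (U : Ω → δ) : ℝ :=
  ent p (fun ω => (V ω, U ω)) + ent p (fun ω => (W ω, U ω))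
    - ent p (fun ω => (V ω, W ω, U ω)) - ent p U

end

/-- Conditions (B) and `H(A | X,Y) = 0` together imply condition (C). -/
theorem stmt_2 {Ω α χ υ : Type*} [Fintype Ω] [Fintype α] [Fintype χ] [Fintype υ]
    (p : Ω → ℝ) (hp : IsPMF p) (A : Ω → α) (X : Ω → χ) (Y : Ω → υ)
    (h0 : condEnt p A (fun ω => (X ω, Y ω)) = 0)
    (hB : ∀ (a : α) (x : χ) (y : υ),
      0 < pr p {ω | A ω = a ∧ X ω = x} →
      0 < pr p {ω | A ω = a ∧ Y ω = y} →
      0 < pr p {ω | A ω = a ∧ X ω = x ∧ Y ω = y}) :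
    ∀ (a a' : α) (x : χ) (y : υ),
      0 < pr p {ω | A ω = a ∧ X ω = x} →
      0 < pr p {ω | A ω = a ∧ Y ω = y} →
      0 < pr p {ω | A ω = a' ∧ X ω = x} →
      0 < pr p {ω | A ω = a' ∧ Y ω = y} → a = a' := by
  classical
  obtain ⟨hp0, -⟩ := hp
  have prnn : ∀ E : Set Ω, 0 ≤ pr p E := fun E =>
    Finset.sum_nonneg fun ω _ => Set.indicator_nonneg (fun ω _ => hp0 ω) ω
  have prmono : ∀ E F : Set Ω, E ⊆ F → pr p E ≤ pr p F := fun E F hEF =>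
    Finset.sum_le_sum fun ω _ =>
      Set.indicator_le_indicator_of_subset hEF (fun ω => hp0 ω) ω
  set r : α × χ × υ → ℝ := fun w => pr p {ω | (A ω, X ω, Y ω) = w} with hrdef
  set q : χ × υ → ℝ := fun v => pr p {ω | (X ω, Y ω) = v} with hqdef
  -- marginal identity
  have hsum : ∀ v : χ × υ, q v = ∑ b : α, r (b, v) := by
    intro v
    simp only [hrdef, hqdef, pr]
    rw [Finset.sum_comm]
    refine Finset.sum_congr rfl fun ω _ => ?_
    by_cases h : (X ω, Y ω) = v
    · rw [Set.indicator_of_mem (show ω ∈ {ω | (X ω, Y ω) = v} from h) p]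
      rw [Finset.sum_eq_single (A ω)]
      · rw [Set.indicator_of_mem
          (show ω ∈ {ω' | (A ω', X ω', Y ω') = (A ω, v)} from by
            show (A ω, X ω, Y ω) = (A ω, v)
            rw [Prod.ext_iff]; exact ⟨rfl, h⟩) p]
      · intro b _ hb
        rw [Set.indicator_of_notMem
          (show ω ∉ {ω | (A ω, X ω, Y ω) = (b, v)} from by
            show ¬(A ω, X ω, Y ω) = (b, v)
            rw [Prod.ext_iff]; rintro ⟨h1, -⟩; exact hb h1.symm) p]
      · intro hmem; exact absurd (Finset.mem_univ _) hmem
    · rw [Set.indicator_of_notMem (show ω ∉ {ω | (X ω, Y ω) = v} from h) p]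
      symm; apply Finset.sum_eq_zero
      intro b _
      rw [Set.indicator_of_notMem
        (show ω ∉ {ω | (A ω, X ω, Y ω) = (b, v)} from by
          show ¬(A ω, X ω, Y ω) = (b, v)
          rw [Prod.ext_iff]; rintro ⟨-, h2⟩; exact h h2) p]
  -- r ≤ q
  have hle : ∀ w : α × χ × υ, r w ≤ q (w.2) := by
    intro w
    apply prmono
    intro ω hω
    simp only [Set.mem_setOf_eq] at *
    rw [← hω]
  -- h0 rewritten
  have h0' : ∑ w : α × χ × υ, r w * (Real.logb 2 (q w.2) - Real.logb 2 (r w)) = 0 := by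
    have hgroup : ∑ w : α × χ × υ, r w * Real.logb 2 (q w.2)
        = ∑ v : χ × υ, q v * Real.logb 2 (q v) := by
      rw [Fintype.sum_prod_type_right]
      refine Finset.sum_congr rfl fun v _ => ?_
      rw [hsum v, Finset.sum_mul]
      exact Finset.sum_congr rfl fun b _ => by rw [← hsum v]
    have h0'' : ∑ w : α × χ × υ, r w * Real.logb 2 (r w)
        = ∑ v : χ × υ, q v * Real.logb 2 (q v) := by
      have := h0
      simp only [condEnt, ent] at this
      have : ∑ w : α × (χ × υ), pr p {ω | (A ω, X ω, Y ω) = w} *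
          Real.logb 2 (pr p {ω | (A ω, X ω, Y ω) = w})
          = ∑ v : χ × υ, pr p {ω | (X ω, Y ω) = v} *
            Real.logb 2 (pr p {ω | (X ω, Y ω) = v}) := by linarith
      exact this
    simp only [mul_sub]
    rw [Finset.sum_sub_distrib, hgroup, h0'']
    ring
  -- determinism: r w > 0 → q w.2 = r w
  have hdet : ∀ w : α × χ × υ, 0 < r w → q w.2 = r w := by
    intro w hw
    have hnn : ∀ w' ∈ Finset.univ, (0:ℝ) ≤ r w' * (Real.logb 2 (q w'.2) - Real.logb 2 (r w')) := by
      intro w' _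
      rcases eq_or_lt_of_le (prnn _ : 0 ≤ r w') with h | h
      · have h' : r w' = 0 := h.symm
        rw [h']; simp
      · apply mul_nonneg h.le
        have := (Real.logb_le_logb (by norm_num : (1:ℝ) < 2) h (lt_of_lt_of_le h (hle w'))).mpr (hle w')
        linarith
    have hz := (Finset.sum_eq_zero_iff_of_nonneg hnn).mp h0' w (Finset.mem_univ w)
    by_contra hne
    have hlt : r w < q w.2 := lt_of_le_of_ne (hle w) (Ne.symm hne)
    have := Real.logb_lt_logb (by norm_num : (1:ℝ) < 2) hw hlt
    nlinarith
  -- translate set forms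
  have hset : ∀ (b : α) (x : χ) (y : υ),
      pr p {ω | A ω = b ∧ X ω = x ∧ Y ω = y} = r (b, x, y) := by
    intro b x y
    simp only [hrdef]
    congr 1
    ext ω
    simp [Prod.ext_iff]
  intro a a' x y hax hay ha'x ha'y
  by_contra hne
  have hra : 0 < r (a, x, y) := by rw [← hset]; exact hB a x y hax hay
  have hra' : 0 < r (a', x, y) := by rw [← hset]; exact hB a' x y ha'x ha'y
  have hq1 : q (x, y) = r (a, x, y) := hdet (a, x, y) hra
  have hq2 : q (x, y) = ∑ b : α, r (b, (x, y)) := hsum (x, y)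
  have hge : r (a, x, y) + r (a', x, y) ≤ ∑ b : α, r (b, (x, y)) := by
    have h2 := Finset.sum_le_sum_of_subset_of_nonneg (f := fun b => r (b, x, y))
      (Finset.subset_univ ({a, a'} : Finset α)) (fun b _ _ => prnn _)
    rwa [Finset.sum_pair hne] at h2
  linarith
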